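/- Define the map F̃ from ℝ⁴ × (ℂ²∖{0}) to ℂ⁴ by F̃(x, π) = (A(x)·πˇ, πˇ) where πˇ = (-π¹, π⁰) and A(x) = (1/√2)[[x⁰+ix³, x¹+ix²],[-x¹+ix², x⁰-ix³]]. Then F̃ is a bijection onto { (w, v) ∈ ℂ²×ℂ² : v ≠ 0 }. -/

import Mathlib

/-- The standard identification A(x) of ℝ⁴ with 2×2 complex matrices. -/
noncomputable def Amat (x : Fin 4 → ℝ) : Matrix (Fin 2) (Fin 2) ℂ :=
  ((1 / Real.sqrt 2 : ℝ) : ℂ) •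
    !![(x 0 : ℂ) + (x 3 : ℂ) * Complex.I, (x 1 : ℂ) + (x 2 : ℂ) * Complex.I;
       -(x 1 : ℂ) + (x 2 : ℂ) * Complex.I, (x 0 : ℂ) - (x 3 : ℂ) * Complex.I]

/-- F̃(x, π) = (A(x)·πˇ, πˇ) with πˇ = (-π¹, π⁰). -/
noncomputable def Ftilde (p : (Fin 4 → ℝ) × (Fin 2 → ℂ)) : (Fin 2 → ℂ) × (Fin 2 → ℂ) :=
  ((Amat p.1).mulVec ![-(p.2 1), p.2 0], ![-(p.2 1), p.2 0])

open Complex in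
/-- numerator denominators -/
noncomputable def Nc (v : Fin 2 → ℂ) : ℂ :=
  (starRingEnd ℂ) (v 0) * v 0 + (starRingEnd ℂ) (v 1) * v 1

open Complex in
noncomputable def alC (q : (Fin 2 → ℂ) × (Fin 2 → ℂ)) : ℂ :=
  ((starRingEnd ℂ) (q.2 0) * ((Real.sqrt 2 : ℂ) * q.1 0)
    + q.2 1 * (starRingEnd ℂ) ((Real.sqrt 2 : ℂ) * q.1 1)) / Nc q.2

open Complex in
noncomputable def beC (q : (Fin 2 → ℂ) × (Fin 2 → ℂ)) : ℂ :=
  ((starRingEnd ℂ) (q.2 1) * ((Real.sqrt 2 : ℂ) * q.1 0)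
    - q.2 0 * (starRingEnd ℂ) ((Real.sqrt 2 : ℂ) * q.1 1)) / Nc q.2

noncomputable def Ginv (q : (Fin 2 → ℂ) × (Fin 2 → ℂ)) : (Fin 4 → ℝ) × (Fin 2 → ℂ) :=
  (![(alC q).re, (beC q).re, (beC q).im, (alC q).im], ![q.2 1, -(q.2 0)])

lemma Nc_eq (v : Fin 2 → ℂ) :
    Nc v = ((Complex.normSq (v 0) + Complex.normSq (v 1) : ℝ) : ℂ) := by
  simp [Nc, Complex.normSq_eq_conj_mul_self]

lemma Nc_ne_zero {v : Fin 2 → ℂ} (hv : v ≠ 0) : Nc v ≠ 0 := by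
  rw [Nc_eq]
  have : ∃ i, v i ≠ 0 := by
    by_contra h
    push_neg at h
    exact hv (funext h)
  obtain ⟨i, hi⟩ := this
  have h0 : 0 ≤ Complex.normSq (v 0) := Complex.normSq_nonneg _
  have h1 : 0 ≤ Complex.normSq (v 1) := Complex.normSq_nonneg _
  have hpos : 0 < Complex.normSq (v 0) + Complex.normSq (v 1) := by
    rcases eq_or_ne (v 0) 0 with h|h
    · have hv1 : v 1 ≠ 0 := by
        intro h1
        exact hv (funext fun j => by fin_cases j <;> simp [h, h1])
      have := Complex.normSq_pos.mpr hv1; linarith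
    · have := Complex.normSq_pos.mpr h; linarith
  exact_mod_cast hpos.ne'

lemma mulVec_Amat (x : Fin 4 → ℝ) (u : Fin 2 → ℂ) :
    (Amat x).mulVec u =
      ![((1 / Real.sqrt 2 : ℝ) : ℂ) *
          (((x 0 : ℂ) + (x 3 : ℂ) * Complex.I) * u 0 + ((x 1 : ℂ) + (x 2 : ℂ) * Complex.I) * u 1),
        ((1 / Real.sqrt 2 : ℝ) : ℂ) *
          ((-(x 1 : ℂ) + (x 2 : ℂ) * Complex.I) * u 0 + ((x 0 : ℂ) - (x 3 : ℂ) * Complex.I) * u 1)] := by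
  funext i
  fin_cases i <;>
    simp [Amat, Matrix.mulVec, dotProduct, Fin.sum_univ_two] <;> ring

lemma sqrt2_ne : ((Real.sqrt 2 : ℝ) : ℂ) ≠ 0 := by
  exact_mod_cast (Real.sqrt_pos.mpr (by norm_num)).ne'

lemma pi_check_ne {π : Fin 2 → ℂ} (hπ : π ≠ 0) : (![-(π 1), π 0] : Fin 2 → ℂ) ≠ 0 := by
  intro h
  apply hπ
  funext i
  have h0 := congrFun h 0
  have h1 := congrFun h 1
  simp at h0 h1
  fin_cases i <;> simp [h0, h1]

theorem stmt_13 :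
    Set.BijOn Ftilde {p : (Fin 4 → ℝ) × (Fin 2 → ℂ) | p.2 ≠ 0}
      {q : (Fin 2 → ℂ) × (Fin 2 → ℂ) | q.2 ≠ 0} := by
  have hmapsF : Set.MapsTo Ftilde {p : (Fin 4 → ℝ) × (Fin 2 → ℂ) | p.2 ≠ 0}
      {q : (Fin 2 → ℂ) × (Fin 2 → ℂ) | q.2 ≠ 0} := by
    intro p hp
    exact pi_check_ne hp
  have hmapsG : Set.MapsTo Ginv {q : (Fin 2 → ℂ) × (Fin 2 → ℂ) | q.2 ≠ 0}
      {p : (Fin 4 → ℝ) × (Fin 2 → ℂ) | p.2 ≠ 0} := by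
    intro q hq
    simp only [Set.mem_setOf_eq, Ginv] at *
    intro h
    apply hq
    have h0 := congrFun h 0
    have h1 := congrFun h 1
    simp at h0 h1
    funext i
    fin_cases i <;> simp [h0, h1]
  have hinv : Set.InvOn Ginv Ftilde {p : (Fin 4 → ℝ) × (Fin 2 → ℂ) | p.2 ≠ 0}
      {q : (Fin 2 → ℂ) × (Fin 2 → ℂ) | q.2 ≠ 0} := by
    constructor
    · -- LeftInvOn : Ginv (Ftilde p) = p
      intro p hp
      simp only [Set.mem_setOf_eq] at hp
      obtain ⟨x, π⟩ := p
      simp only at hp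
      have hv : (![-(π 1), π 0] : Fin 2 → ℂ) ≠ 0 := pi_check_ne hp
      have hN := Nc_ne_zero hv
      have hαβ : alC (Ftilde (x, π)) = (x 0 : ℂ) + (x 3 : ℂ) * Complex.I ∧
          beC (Ftilde (x, π)) = (x 1 : ℂ) + (x 2 : ℂ) * Complex.I := by
        constructor <;>
        · simp only [alC, beC, Ftilde, mulVec_Amat]
          rw [div_eq_iff hN]
          simp only [Nc, Matrix.cons_val_zero, Matrix.cons_val_one, Matrix.head_cons,
            map_mul, map_add, map_sub, map_neg, Complex.conj_ofReal, Complex.conj_I,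
            map_div₀, map_one]
          have hs := sqrt2_ne
          field_simp
          rw [show ((Real.sqrt 2 : ℝ) : ℂ) * ((1 / Real.sqrt 2 : ℝ) : ℂ) = 1 by
            rw [Complex.ofReal_div, Complex.ofReal_one, mul_one_div_cancel hs]]
          ring
      rw [Prod.ext_iff]
      constructor
      · funext i
        fin_cases i <;>
          simp [Ginv, hαβ.1, hαβ.2]
      · funext i
        fin_cases i <;> simp [Ginv, Ftilde]
    · -- RightInvOn : Ftilde (Ginv q) = q
      intro q hq
      simp only [Set.mem_setOf_eq] at hq
      have hN := Nc_ne_zero hq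
      have hre : ∀ z : ℂ, ((z.re : ℝ) : ℂ) + ((z.im : ℝ) : ℂ) * Complex.I = z := by
        intro z; exact Complex.re_add_im z
      have hconj : ∀ z : ℂ, ((z.re : ℝ) : ℂ) - ((z.im : ℝ) : ℂ) * Complex.I = (starRingEnd ℂ) z := by
        intro z
        simp [Complex.ext_iff]
      rw [Prod.ext_iff]
      constructor
      · -- first components
        have hs := sqrt2_ne
        have hone : ((1 / Real.sqrt 2 : ℝ) : ℂ) * ((Real.sqrt 2 : ℝ) : ℂ) = 1 := by
          push_cast
          field_simp
        have e0 : alC q * q.2 0 + beC q * q.2 1 = ((Real.sqrt 2 : ℝ) : ℂ) * q.1 0 := by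
          rw [alC, beC, div_mul_eq_mul_div, div_mul_eq_mul_div, ← add_div,
            div_eq_iff hN, Nc]
          ring
        have e1 : -((starRingEnd ℂ) (beC q)) * q.2 0 + (starRingEnd ℂ) (alC q) * q.2 1
            = ((Real.sqrt 2 : ℝ) : ℂ) * q.1 1 := by
          have hN' : (starRingEnd ℂ) (Nc q.2) ≠ 0 := by
            rw [Nc_eq]; rw [Nc_eq] at hN; simpa using hN
          simp only [alC, beC, map_div₀, map_add, map_sub, map_mul, Complex.conj_conj,
            Complex.conj_ofReal]
          field_simp
          simp only [Nc, map_add, map_mul, Complex.conj_conj]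
          ring
        have g0 : (Ginv q).1 0 = (alC q).re := rfl
        have g1 : (Ginv q).1 1 = (beC q).re := rfl
        have g2 : (Ginv q).1 2 = (beC q).im := rfl
        have g3 : (Ginv q).1 3 = (alC q).im := rfl
        have g4 : (Ginv q).2 0 = q.2 1 := rfl
        have g5 : (Ginv q).2 1 = -(q.2 0) := rfl
        funext i
        fin_cases i
        · show ((Amat (Ginv q).1).mulVec ![-(Ginv q).2 1, (Ginv q).2 0]) 0 = q.1 0
          rw [mulVec_Amat]
          simp only [Matrix.cons_val_zero, Matrix.cons_val_one, Matrix.head_cons,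
            g0, g1, g2, g3, g4, g5, neg_neg]
          rw [hre, hre, e0, ← mul_assoc, hone, one_mul]
        · show ((Amat (Ginv q).1).mulVec ![-(Ginv q).2 1, (Ginv q).2 0]) 1 = q.1 1
          rw [mulVec_Amat]
          simp only [Matrix.cons_val_zero, Matrix.cons_val_one, Matrix.head_cons,
            g0, g1, g2, g3, g4, g5, neg_neg]
          rw [show (-((beC q).re : ℂ)) + ((beC q).im : ℂ) * Complex.I
              = -(((beC q).re : ℂ) - ((beC q).im : ℂ) * Complex.I) by ring]
          rw [hconj, hconj, e1, ← mul_assoc, hone, one_mul]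
      · funext i
        fin_cases i <;> simp [Ftilde, Ginv]
  exact hinv.bijOn hmapsF hmapsG
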